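/- Let n ≥ 1 and 0 ≤ m ≤ n be integers, τ > 0 a real number, a₀,…,a_{n−1} fixed real coefficients, and s₀ a real number. Then there exists a unique tuple of real numbers (b₀,…,b_m) such that the quasipolynomial Δ(s) = s^n + Σ_{k=0}^{n−1} a_k s^k + e^{−sτ} Σ_{k=0}^{m} b_k s^k satisfies Δ^{(k)}(s₀) = 0 for all 0 ≤ k ≤ m; that is, the system of m + 1 equations Δ^{(k)}(s₀) = 0, k = 0,…,m, is linear in the unknowns b₀,…,b_m and admits a unique solution. -/

import Mathlib

open Polynomial

noncomputable section MIDaux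

/-- The operator `Q ↦ Q' - τ • Q` over ℝ. -/
def LopR (τ : ℝ) : Module.End ℝ ℝ[X] :=
  Polynomial.derivative - τ • LinearMap.id

/-- The operator `Q ↦ Q' - τ • Q` over ℂ (with real τ). -/
def LopC (τ : ℝ) : Module.End ℂ ℂ[X] :=
  Polynomial.derivative - (τ : ℂ) • LinearMap.id

lemma LopR_apply (τ : ℝ) (Q : ℝ[X]) : LopR τ Q = derivative Q - τ • Q := by
  simp [LopR]

lemma LopC_apply (τ : ℝ) (Q : ℂ[X]) : LopC τ Q = derivative Q - (τ : ℂ) • Q := by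
  simp [LopC]

/-- Iterated derivative of `s ↦ P(s) + e^{-sτ} Q(s)`. -/
lemma iteratedDeriv_poly_exp (τ : ℝ) (k : ℕ) (P Q : ℂ[X]) :
    iteratedDeriv k (fun s : ℂ => P.eval s + Complex.exp (-s * (τ : ℂ)) * Q.eval s)
      = fun s : ℂ => (((Polynomial.derivative : Module.End ℂ ℂ[X]) ^ k) P).eval s
          + Complex.exp (-s * (τ : ℂ)) * ((LopC τ ^ k) Q).eval s := by
  induction k with
  | zero => simp
  | succ k ih =>
    rw [iteratedDeriv_succ, ih]
    funext s
    have hexp : HasDerivAt (fun s : ℂ => Complex.exp (-s * (τ : ℂ)))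
        (Complex.exp (-s * (τ : ℂ)) * (-(τ : ℂ))) s := by
      have h1 : HasDerivAt (fun s : ℂ => -s * (τ : ℂ)) (-(τ : ℂ)) s := by
        simpa using ((hasDerivAt_id s).neg.mul_const (τ : ℂ))
      simpa using h1.cexp
    have hP := (((Polynomial.derivative : Module.End ℂ ℂ[X]) ^ k) P).hasDerivAt s
    have hQ := ((LopC τ ^ k) Q).hasDerivAt s
    have h := hP.add (hexp.mul hQ)
    rw [(show HasDerivAt (fun s : ℂ => (((Polynomial.derivative : Module.End ℂ ℂ[X]) ^ k) P).eval s
        + Complex.exp (-s * (τ : ℂ)) * ((LopC τ ^ k) Q).eval s) _ s from h).deriv, pow_succ', pow_succ', Module.End.mul_apply, Module.End.mul_apply,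
      LopC_apply]
    simp only [eval_sub, eval_smul, smul_eq_mul]
    ring

end MIDaux

noncomputable section MIDaux2
open Polynomial

lemma eval_derivPow_eq_zero (τ s₀ : ℝ) :
    ∀ (k : ℕ) (Q : ℝ[X]), (∀ j ≤ k, ((LopR τ ^ j) Q).eval s₀ = 0) →
      (((Polynomial.derivative : Module.End ℝ ℝ[X]) ^ k) Q).eval s₀ = 0 := by
  intro k
  induction k with
  | zero => intro Q h; simpa using h 0 le_rfl
  | succ k ih =>
    intro Q h
    have hD : ((Polynomial.derivative : Module.End ℝ ℝ[X]) ^ (k + 1)) Q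
        = ((Polynomial.derivative : Module.End ℝ ℝ[X]) ^ k) (LopR τ Q)
          + τ • ((Polynomial.derivative : Module.End ℝ ℝ[X]) ^ k) Q := by
      rw [pow_succ, Module.End.mul_apply]
      have h1 : (Polynomial.derivative : Module.End ℝ ℝ[X]) Q = LopR τ Q + τ • Q := by
        rw [LopR_apply]; ring
      rw [h1, map_add, map_smul]
    rw [hD, eval_add, eval_smul]
    rw [ih (LopR τ Q) (fun j hj => by
          have := h (j + 1) (Nat.succ_le_succ hj)
          rwa [pow_succ, Module.End.mul_apply] at this),
        ih Q (fun j hj => h j (hj.trans (Nat.le_succ k)))]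
    simp

lemma poly_eq_zero_of_derivs (s₀ : ℝ) (m : ℕ) (Q : ℝ[X]) (hdeg : Q.natDegree ≤ m)
    (h : ∀ k ≤ m, (((Polynomial.derivative : Module.End ℝ ℝ[X]) ^ k) Q).eval s₀ = 0) :
    Q = 0 := by
  have htay : taylor s₀ Q = 0 := by
    ext i
    simp only [coeff_zero]
    rcases le_or_gt i m with hi | hi
    · have h1 : (taylor s₀ Q).coeff i = (hasseDeriv i Q).eval s₀ :=
        taylor_coeff (r := s₀) (f := Q) i
      have h2 : (Nat.factorial i : ℝ) * (hasseDeriv i Q).eval s₀ = 0 := by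
        have h3 := congrFun (Polynomial.factorial_smul_hasseDeriv (R := ℝ) i) Q
        have h4 : derivative^[i] Q
            = ((Polynomial.derivative : Module.End ℝ ℝ[X]) ^ i) Q := by
          rw [Module.End.pow_apply]
        have h5 : (Nat.factorial i : ℝ) * (hasseDeriv i Q).eval s₀
            = ((Nat.factorial i • (hasseDeriv (R := ℝ) i)) Q).eval s₀ := by
          simp [LinearMap.smul_apply, nsmul_eq_mul]
        rw [h5, h3, h4, h i hi]
      have hfac : (Nat.factorial i : ℝ) ≠ 0 := Nat.cast_ne_zero.mpr (Nat.factorial_ne_zero i)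
      rw [h1]
      exact (mul_eq_zero.mp h2).resolve_left hfac
    · exact coeff_eq_zero_of_natDegree_lt
        (by rw [natDegree_taylor]; exact lt_of_le_of_lt hdeg hi)
  have := taylor_injective s₀ (htay.trans (map_zero (taylor s₀)).symm)
  exact this

end MIDaux2

noncomputable section MIDaux3
open Polynomial

/-- The linear map sending coefficients to the polynomial. -/
def Qlin (m : ℕ) : (Fin (m + 1) → ℝ) →ₗ[ℝ] ℝ[X] where
  toFun b := ∑ j : Fin (m + 1), C (b j) * X ^ (j : ℕ)
  map_add' b c := by
    simp only [Pi.add_apply, C_add, add_mul]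
    rw [Finset.sum_add_distrib]
  map_smul' r b := by
    simp only [Pi.smul_apply, smul_eq_mul, RingHom.id_apply, Finset.smul_sum]
    congr 1; funext j
    rw [smul_eq_C_mul, C_mul, mul_assoc]

lemma Qlin_apply (m : ℕ) (b : Fin (m + 1) → ℝ) :
    Qlin m b = ∑ j : Fin (m + 1), C (b j) * X ^ (j : ℕ) := rfl

lemma Qlin_natDegree_le (m : ℕ) (b : Fin (m + 1) → ℝ) : (Qlin m b).natDegree ≤ m := by
  rw [Qlin_apply]
  refine natDegree_sum_le_of_forall_le _ _ fun j _ => ?_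
  calc (C (b j) * X ^ (j : ℕ)).natDegree ≤ (X ^ (j : ℕ) : ℝ[X]).natDegree :=
        natDegree_C_mul_le _ _
    _ = (j : ℕ) := natDegree_X_pow _
    _ ≤ m := Nat.lt_succ_iff.mp j.isLt

lemma Qlin_coeff (m : ℕ) (b : Fin (m + 1) → ℝ) (j : Fin (m + 1)) :
    (Qlin m b).coeff (j : ℕ) = b j := by
  rw [Qlin_apply]
  simp only [finset_sum_coeff, coeff_C_mul, coeff_X_pow]
  rw [Finset.sum_eq_single j]
  · simp
  · intro i _ hij
    have hne : (j : ℕ) ≠ (i : ℕ) := fun h => hij (Fin.ext h.symm)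
    simp [hne]
  · simp

/-- The linear map b ↦ (eval at s₀ of L^k (Q_b))_k. -/
def Tlin (m : ℕ) (τ s₀ : ℝ) : (Fin (m + 1) → ℝ) →ₗ[ℝ] (Fin (m + 1) → ℝ) :=
  LinearMap.pi fun k => (Polynomial.leval s₀) ∘ₗ (LopR τ ^ (k : ℕ)) ∘ₗ Qlin m

lemma Tlin_apply (m : ℕ) (τ s₀ : ℝ) (b : Fin (m + 1) → ℝ) (k : Fin (m + 1)) :
    Tlin m τ s₀ b k = ((LopR τ ^ (k : ℕ)) (Qlin m b)).eval s₀ := rfl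

lemma Tlin_bijective (m : ℕ) (τ s₀ : ℝ) : Function.Bijective (Tlin m τ s₀) := by
  have hinj : Function.Injective (Tlin m τ s₀) := by
    rw [injective_iff_map_eq_zero]
    intro b hb
    have hL : ∀ j ≤ m, ((LopR τ ^ j) (Qlin m b)).eval s₀ = 0 := fun j hj => by
      have := congrFun hb ⟨j, Nat.lt_succ_of_le hj⟩
      simpa [Tlin_apply] using this
    have hQ : Qlin m b = 0 :=
      poly_eq_zero_of_derivs s₀ m (Qlin m b) (Qlin_natDegree_le m b)
        (fun k hk => eval_derivPow_eq_zero τ s₀ k (Qlin m b)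
          (fun j hj => hL j (hj.trans hk)))
    funext j
    have := Qlin_coeff m b j
    rw [hQ] at this
    simpa using this.symm
  exact ⟨hinj, LinearMap.injective_iff_surjective.mp hinj⟩

end MIDaux3

noncomputable section MIDaux4
open Polynomial

lemma map_LopR_pow (τ : ℝ) (k : ℕ) (Q : ℝ[X]) :
    (LopC τ ^ k) (Q.map (algebraMap ℝ ℂ)) = ((LopR τ ^ k) Q).map (algebraMap ℝ ℂ) := by
  induction k generalizing Q with
  | zero => simp
  | succ k ih =>
    have h1 : LopC τ (Q.map (algebraMap ℝ ℂ)) = (LopR τ Q).map (algebraMap ℝ ℂ) := by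
      rw [LopC_apply, LopR_apply, derivative_map, smul_eq_C_mul, smul_eq_C_mul,
        Polynomial.map_sub, Polynomial.map_mul, map_C]
      norm_num
    rw [pow_succ, pow_succ, Module.End.mul_apply, Module.End.mul_apply, h1, ih]

lemma map_derivative_pow (k : ℕ) (P : ℝ[X]) :
    ((Polynomial.derivative : Module.End ℂ ℂ[X]) ^ k) (P.map (algebraMap ℝ ℂ))
      = (((Polynomial.derivative : Module.End ℝ ℝ[X]) ^ k) P).map (algebraMap ℝ ℂ) := by
  induction k generalizing P with
  | zero => simp
  | succ k ih =>
    rw [pow_succ, pow_succ, Module.End.mul_apply, Module.End.mul_apply, derivative_map, ih]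

lemma eval_map_ofReal (P : ℝ[X]) (s₀ : ℝ) :
    (P.map (algebraMap ℝ ℂ)).eval (s₀ : ℂ) = ((P.eval s₀ : ℝ) : ℂ) := by
  rw [eval_map]
  have := eval₂_at_apply (algebraMap ℝ ℂ) s₀ (p := P)
  simpa using this

end MIDaux4

open Polynomial in
theorem exists_unique_b_multiplicity (n m : ℕ) (hn : 1 ≤ n) (hm : m ≤ n)
    (τ : ℝ) (hτ : 0 < τ) (a : Fin n → ℝ) (s₀ : ℝ) :
    ∃! b : Fin (m + 1) → ℝ, ∀ k ≤ m,
      iteratedDeriv k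
        (fun s : ℂ => s ^ n + (∑ k : Fin n, (a k : ℂ) * s ^ (k : ℕ)) +
          Complex.exp (-s * τ) * ∑ k : Fin (m + 1), (b k : ℂ) * s ^ (k : ℕ))
        (s₀ : ℂ) = 0 := by
  classical
  set E : ℝ := Real.exp (-(s₀ * τ)) with hE
  have hE0 : E ≠ 0 := (Real.exp_pos _).ne'
  have hiff : ∀ c t : ℝ, (c + E * t = 0) ↔ (t = -c / E) := fun c t => by
    rw [eq_div_iff hE0]
    constructor <;> intro h <;> [linarith [mul_comm E t]; linarith [mul_comm E t]]
  set Pr : ℝ[X] := X ^ n + ∑ j : Fin n, C (a j) * X ^ (j : ℕ) with hPr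
  set w : Fin (m + 1) → ℝ := fun k =>
    -((((Polynomial.derivative : Module.End ℝ ℝ[X]) ^ (k : ℕ)) Pr).eval s₀) / E with hw
  have key : ∀ b : Fin (m + 1) → ℝ,
      (∀ k ≤ m, iteratedDeriv k
        (fun s : ℂ => s ^ n + (∑ k : Fin n, (a k : ℂ) * s ^ (k : ℕ)) +
          Complex.exp (-s * τ) * ∑ k : Fin (m + 1), (b k : ℂ) * s ^ (k : ℕ))
        (s₀ : ℂ) = 0) ↔ Tlin m τ s₀ b = w := by
    intro b
    have hfun : (fun s : ℂ => s ^ n + (∑ k : Fin n, (a k : ℂ) * s ^ (k : ℕ)) +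
          Complex.exp (-s * τ) * ∑ k : Fin (m + 1), (b k : ℂ) * s ^ (k : ℕ))
        = fun s : ℂ => (Pr.map (algebraMap ℝ ℂ)).eval s +
            Complex.exp (-s * (τ : ℂ)) * ((Qlin m b).map (algebraMap ℝ ℂ)).eval s := by
      funext s
      rw [hPr, Qlin_apply]
      simp only [eval_map, eval₂_add, eval₂_pow, eval₂_X, eval₂_finset_sum, eval₂_mul,
        eval₂_C, Complex.coe_algebraMap]
    have hexp : Complex.exp (-(s₀ : ℂ) * (τ : ℂ)) = (E : ℂ) := by
      rw [hE, Complex.ofReal_exp]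
      norm_num
    have hpt : ∀ (k : ℕ) (hk : k ≤ m),
        (iteratedDeriv k
          (fun s : ℂ => s ^ n + (∑ k : Fin n, (a k : ℂ) * s ^ (k : ℕ)) +
            Complex.exp (-s * τ) * ∑ k : Fin (m + 1), (b k : ℂ) * s ^ (k : ℕ))
          (s₀ : ℂ) = 0)
        ↔ Tlin m τ s₀ b ⟨k, Nat.lt_succ_of_le hk⟩ = w ⟨k, Nat.lt_succ_of_le hk⟩ := by
      intro k hk
      rw [hfun, iteratedDeriv_poly_exp τ k]
      simp only [map_LopR_pow, map_derivative_pow, eval_map_ofReal]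
      rw [hexp, ← Complex.ofReal_mul, ← Complex.ofReal_add, Complex.ofReal_eq_zero]
      rw [Tlin_apply]
      simpa only [hw] using hiff _ _
    constructor
    · intro h
      funext j
      exact (hpt (j : ℕ) (Nat.lt_succ_iff.mp j.isLt)).mp (h (j : ℕ) (Nat.lt_succ_iff.mp j.isLt))
    · intro h k hk
      exact (hpt k hk).mpr (congrFun h _)
  rw [existsUnique_congr key]
  obtain ⟨b, hb⟩ := (Tlin_bijective m τ s₀).2 w
  exact ⟨b, hb, fun c hc => (Tlin_bijective m τ s₀).1 (hb ▸ hc)⟩
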